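/- arXiv:2508.19706 — 2 statements merged into one kernel-verified Lean document; each statement's English description precedes it below -/
import Mathlib

section
/- Let p be a prime, a, d ≥ 1 integers, G = (ℤ/p^aℤ)^d, and R an integral domain containing a primitive p^a-th root of unity. Let h : G → R be any function. Then for every g ∈ G, the sum over all additive characters ψ of G with values in R of exact order p^a of Σ_{w ∈ G} ψ(w)·h(g+w) equals p^{ad}·h(g) − p^{(a−1)d}·Σ_{w ∈ G, p·w = 0} h(g+w), where the integer coefficients are interpreted in R via the canonical ring map ℤ → R. -/
set_option linter.unusedSectionVars false

open Finset AddChar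

namespace Ave1

variable {N : ℕ} [NeZero N] {R : Type*} [CommRing R] [IsDomain R] {ζ : R}

/-- character of a sum is product of characters -/
lemma addChar_map_sum {G : Type*} [AddCommMonoid G] (ψ : AddChar G R) {ι : Type*}
    (s : Finset ι) (f : ι → G) : ψ (∑ i ∈ s, f i) = ∏ i ∈ s, ψ (f i) := by
  classical
  induction s using Finset.induction with
  | empty => simp
  | insert a s hx ih =>
                    rw [Finset.sum_insert hx, Finset.prod_insert hx, map_add_eq_mul, ih]

variable (hζ : ζ ^ N = 1) {d : ℕ}

/-- the character of `(ZMod N)^d` attached to a vector `x`. -/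
noncomputable def psi (d : ℕ) (x : Fin d → ZMod N) : AddChar (Fin d → ZMod N) R where
  toFun w := ∏ i, zmodChar N hζ (x i * w i)
  map_zero_eq_one' := by simp
  map_add_eq_mul' w w' := by
    simp only [Pi.add_apply, mul_add, map_add_eq_mul, Finset.prod_mul_distrib]

lemma psi_apply (x w : Fin d → ZMod N) :
    psi hζ d x w = ∏ i, zmodChar N hζ (x i * w i) := rfl

lemma psi_apply_eq (x w : Fin d → ZMod N) :
    psi hζ d x w = zmodChar N hζ (∑ i, x i * w i) := by
  rw [psi_apply, addChar_map_sum (zmodChar N hζ)]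

lemma psi_single (x : Fin d → ZMod N) (j : Fin d) (c : ZMod N) :
    psi hζ d x (Pi.single j c) = zmodChar N hζ (x j * c) := by
  rw [psi_apply, Finset.prod_eq_single_of_mem j (Finset.mem_univ j)
    (fun i _ hij => by rw [Pi.single_eq_of_ne hij, mul_zero, map_zero_eq_one]), Pi.single_eq_same]


lemma psi_injective (hprim : IsPrimitiveRoot ζ N) :
    Function.Injective (psi (R := R) hprim.pow_eq_one d) := by
  intro x y hxy
  funext j
  have h1 : psi hprim.pow_eq_one d x (Pi.single j 1) =
      psi hprim.pow_eq_one d y (Pi.single j 1) := by rw [hxy]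
  rw [psi_single, psi_single, mul_one, mul_one, zmodChar_apply, zmodChar_apply] at h1
  exact ZMod.val_injective N (hprim.pow_inj (ZMod.val_lt _) (ZMod.val_lt _) h1)

lemma psi_surjective (hprim : IsPrimitiveRoot ζ N)
    (ψ : AddChar (Fin d → ZMod N) R) :
    ∃ x : Fin d → ZMod N, psi (R := R) hprim.pow_eq_one d x = ψ := by
  have hroot : ∀ j : Fin d, ∃ m : ℕ, ζ ^ m = ψ (Pi.single j 1) := by
    intro j
    have hpow : (ψ (Pi.single j 1)) ^ N = 1 := by
      rw [← map_nsmul_eq_pow, ← Pi.single_smul, nsmul_eq_mul, mul_one,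
        ZMod.natCast_self, Pi.single_zero, map_zero_eq_one]
    obtain ⟨m, _, hm⟩ := hprim.eq_pow_of_pow_eq_one hpow
    exact ⟨m, hm⟩
  choose m hm using hroot
  refine ⟨fun j => (m j : ZMod N), ?_⟩
  ext w
  have hw : w = ∑ j, Pi.single j (w j) := (Finset.univ_sum_single w).symm
  rw [hw, addChar_map_sum, addChar_map_sum]
  refine Finset.prod_congr rfl fun j _ => ?_
  rw [psi_single]
  have h2 : Pi.single j (w j) = ((w j).val • Pi.single j 1 : Fin d → ZMod N) := by
    rw [← Pi.single_smul, nsmul_eq_mul, mul_one, ZMod.natCast_zmod_val]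
  have h3 : ((m j : ZMod N)) * w j = ((m j * (w j).val : ℕ) : ZMod N) := by
    push_cast
    rw [ZMod.natCast_zmod_val]
  rw [h3, zmodChar_apply' hprim.pow_eq_one, h2, map_nsmul_eq_pow, ← hm j, pow_mul]

/-- orthogonality: total sum of `psi x w` over all `x`. -/
lemma sum_psi (hprim : IsPrimitiveRoot ζ N) (w : Fin d → ZMod N) :
    ∑ x : Fin d → ZMod N, psi (R := R) hprim.pow_eq_one d x w
      = if w = 0 then ((N ^ d : ℕ) : R) else 0 := by
  classical
  have : ∑ x : Fin d → ZMod N, psi (R := R) hprim.pow_eq_one d x w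
      = ∏ i, ∑ t : ZMod N, zmodChar N hprim.pow_eq_one (t * w i) := by
    rw [Fintype.prod_sum fun i t => zmodChar N hprim.pow_eq_one (t * w i)]
    rfl
  rw [this]
  have hstep : ∀ i, ∑ t : ZMod N, zmodChar N hprim.pow_eq_one (t * w i)
      = if w i = 0 then ((N : ℕ) : R) else 0 := by
    intro i
    rw [sum_mulShift (w i) (zmodChar_primitive_of_primitive_root N hprim)]
    simp [ZMod.card]
  simp_rw [hstep]
  by_cases hw : w = 0
  · simp [hw, Finset.prod_const, Nat.cast_pow]
  · obtain ⟨i, hi⟩ : ∃ i, w i ≠ 0 := by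
      by_contra hc; push_neg at hc; exact hw (funext hc)
    rw [if_neg hw]
    exact Finset.prod_eq_zero (Finset.mem_univ i) (by rw [if_neg hi])


section Prime

variable {p a : ℕ} [hp : Fact p.Prime]

lemma unit_iff (ha : 1 ≤ a) [NeZero (p ^ a)] (u : ZMod (p ^ a)) :
    IsUnit u ↔ ¬ p ∣ u.val := by
  conv_lhs => rw [← ZMod.natCast_zmod_val u]
  rw [ZMod.isUnit_iff_coprime, Nat.coprime_pow_right_iff ha, Nat.coprime_comm,
    Nat.Prime.coprime_iff_not_dvd hp.out]

lemma psi_isPrimitiveRoot_iff [NeZero (p ^ a)] (hζ : IsPrimitiveRoot ζ (p ^ a)) (ha : 1 ≤ a)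
    {d : ℕ} (x : Fin d → ZMod (p ^ a)) :
    (∃ g₀, IsPrimitiveRoot (psi (R := R) hζ.pow_eq_one d x g₀) (p ^ a))
      ↔ ∃ j, ¬ p ∣ (x j).val := by
  constructor
  · rintro ⟨g₀, hg⟩
    rw [psi_apply_eq, zmodChar_apply] at hg
    have hcop : Nat.Coprime (∑ i, x i * g₀ i).val (p ^ a) :=
      (hζ.pow_iff_coprime (NeZero.pos _) _).mp hg
    by_contra hc
    push_neg at hc
    have hφ : ((∑ i, x i * g₀ i).val : ZMod p) = 0 := by
      have : (ZMod.castHom (dvd_pow_self p (Nat.one_le_iff_ne_zero.mp ha))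
          (ZMod p)) (∑ i, x i * g₀ i) = 0 := by
        rw [map_sum]
        refine Finset.sum_eq_zero fun i _ => ?_
        rw [map_mul]
        have : (ZMod.castHom (dvd_pow_self p (Nat.one_le_iff_ne_zero.mp ha))
            (ZMod p)) (x i) = (((x i).val : ℕ) : ZMod p) := by
          rw [ZMod.castHom_apply, ← ZMod.natCast_val]
        rw [this, (ZMod.natCast_eq_zero_iff _ _).mpr (hc i), zero_mul]
      rwa [ZMod.castHom_apply, ← ZMod.natCast_val] at this
    have hdvd : p ∣ (∑ i, x i * g₀ i).val := (ZMod.natCast_eq_zero_iff _ _).mp hφ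
    exact (Nat.Prime.coprime_iff_not_dvd hp.out).mp
      (Nat.coprime_comm.mp ((Nat.coprime_pow_right_iff ha _ _).mp hcop)) hdvd
  · rintro ⟨j, hj⟩
    refine ⟨Pi.single j 1, ?_⟩
    rw [psi_single, mul_one, zmodChar_apply]
    refine (hζ.pow_iff_coprime (NeZero.pos _) _).mpr ?_
    exact Nat.Coprime.pow_right a
      (Nat.coprime_comm.mp ((Nat.Prime.coprime_iff_not_dvd hp.out).mpr hj))

lemma sum_psi_mul [NeZero (p ^ a)] [NeZero (p ^ (a - 1))] (hζ : IsPrimitiveRoot ζ (p ^ a))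
    (ha : 1 ≤ a) {d : ℕ} (w : Fin d → ZMod (p ^ a)) :
    ∑ y : Fin d → ZMod (p ^ (a - 1)),
        psi (R := R) hζ.pow_eq_one d (fun i => (p : ZMod (p ^ a)) * ((y i).val : ZMod (p ^ a))) w
      = if ∀ i, (p : ZMod (p ^ a)) * w i = 0 then ((p ^ ((a - 1) * d) : ℕ) : R) else 0 := by
  classical
  have hsplit : p ^ a = p * p ^ (a - 1) := by
    conv_lhs => rw [← Nat.sub_add_cancel ha]
    rw [pow_succ, mul_comm]
  have hζp : IsPrimitiveRoot (ζ ^ p) (p ^ (a - 1)) := by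
    have := hζ.pow_of_dvd hp.out.ne_zero (dvd_pow_self p (Nat.one_le_iff_ne_zero.mp ha))
    rwa [show p ^ a / p = p ^ (a - 1) by rw [hsplit, Nat.mul_div_cancel_left _ hp.out.pos]] at this
  set e := zmodChar (p ^ a) hζ.pow_eq_one with he
  set e' := zmodChar (p ^ (a - 1)) hζp.pow_eq_one with he'
  have key : ∀ (i : Fin d) (s : ZMod (p ^ (a - 1))),
      e ((p : ZMod (p ^ a)) * ((s.val : ℕ) : ZMod (p ^ a)) * w i)
        = e' (s * (((w i).val : ℕ) : ZMod (p ^ (a - 1)))) := by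
    intro i s
    have h1 : (p : ZMod (p ^ a)) * ((s.val : ℕ) : ZMod (p ^ a)) * w i
        = ((p * s.val * (w i).val : ℕ) : ZMod (p ^ a)) := by
      push_cast
      rw [ZMod.natCast_zmod_val]
    have h2 : s * (((w i).val : ℕ) : ZMod (p ^ (a - 1)))
        = ((s.val * (w i).val : ℕ) : ZMod (p ^ (a - 1))) := by
      push_cast
      rw [ZMod.natCast_zmod_val]
    rw [h1, h2, he, he', zmodChar_apply' hζ.pow_eq_one, zmodChar_apply' hζp.pow_eq_one,
      ← pow_mul, mul_assoc]
  have hswap : ∑ y : Fin d → ZMod (p ^ (a - 1)),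
      psi (R := R) hζ.pow_eq_one d
        (fun i => (p : ZMod (p ^ a)) * ((y i).val : ZMod (p ^ a))) w
      = ∏ i, ∑ s : ZMod (p ^ (a - 1)), e' (s * (((w i).val : ℕ) : ZMod (p ^ (a - 1)))) := by
    rw [Fintype.prod_sum fun i s => e' (s * (((w i).val : ℕ) : ZMod (p ^ (a - 1))))]
    refine Finset.sum_congr rfl fun y _ => ?_
    rw [psi_apply]
    exact Finset.prod_congr rfl fun i _ => key i (y i)
  rw [hswap]
  have hstep : ∀ i, ∑ s : ZMod (p ^ (a - 1)), e' (s * (((w i).val : ℕ) : ZMod (p ^ (a - 1))))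
      = if (p : ZMod (p ^ a)) * w i = 0 then ((p ^ (a - 1) : ℕ) : R) else 0 := by
    intro i
    rw [sum_mulShift _ (zmodChar_primitive_of_primitive_root _ hζp)]
    have hcond : ((((w i).val : ℕ) : ZMod (p ^ (a - 1))) = 0)
        ↔ ((p : ZMod (p ^ a)) * w i = 0) := by
      rw [ZMod.natCast_eq_zero_iff]
      have h3 : (p : ZMod (p ^ a)) * w i = ((p * (w i).val : ℕ) : ZMod (p ^ a)) := by
        push_cast
        rw [ZMod.natCast_zmod_val]
      rw [h3, ZMod.natCast_eq_zero_iff]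
      constructor
      · intro hdv
        exact (dvd_of_eq hsplit).trans (mul_dvd_mul_left p hdv)
      · intro hdv
        exact (Nat.mul_dvd_mul_iff_left hp.out.pos).mp ((dvd_of_eq hsplit.symm).trans hdv)
    rw [ZMod.card, apply_ite (Nat.cast : ℕ → R), Nat.cast_zero]
    exact if_congr hcond rfl rfl
  simp_rw [hstep]
  by_cases hw : ∀ i, (p : ZMod (p ^ a)) * w i = 0
  · rw [if_pos hw]
    calc (∏ i : Fin d, if (p : ZMod (p ^ a)) * w i = 0 then ((p ^ (a - 1) : ℕ) : R) else 0)
        = ∏ _i : Fin d, ((p ^ (a - 1) : ℕ) : R) :=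
          Finset.prod_congr rfl fun i _ => if_pos (hw i)
      _ = ((p ^ ((a - 1) * d) : ℕ) : R) := by
          rw [Finset.prod_const, Finset.card_univ, Fintype.card_fin, ← Nat.cast_pow, ← pow_mul]
  · obtain ⟨i, hi⟩ := not_forall.mp hw
    rw [if_neg hw]
    exact Finset.prod_eq_zero (Finset.mem_univ i) (by rw [if_neg hi])

end Prime

end Ave1


/-- Lemma 4.19 (`ave1`): for `G = (ℤ/p^aℤ)^d`, an integral domain `R` containing a
primitive `p^a`-th root of unity, and any function `h : G → R`, the sum over all additive
characters `ψ` of `G` of exact order `p^a` of `Σ_{w ∈ G} ψ(w)·h(g+w)` equals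
`p^{ad}·h(g) − p^{(a−1)d}·Σ_{w ∈ G, p·w = 0} h(g+w)`. -/
theorem sum_addChar_exact_order_smul (p a d : ℕ) [Fact p.Prime] (ha : 1 ≤ a) (hd : 1 ≤ d)
    (R : Type*) [CommRing R] [IsDomain R]
    (hroot : ∃ ζ : R, IsPrimitiveRoot ζ (p ^ a))
    (h : (Fin d → ZMod (p ^ a)) → R) (g : Fin d → ZMod (p ^ a)) :
    (∑ᶠ ψ ∈ {ψ : AddChar (Fin d → ZMod (p ^ a)) R |
        ∃ g₀, IsPrimitiveRoot (ψ g₀) (p ^ a)},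
      ∑ w : Fin d → ZMod (p ^ a), ψ w * h (g + w))
    = ((p ^ (a * d) : ℕ) : R) * h g
      - ((p ^ ((a - 1) * d) : ℕ) : R) *
          ∑ w ∈ Finset.univ.filter (fun w : Fin d → ZMod (p ^ a) => p • w = 0),
            h (g + w) := by
  classical
  haveI : NeZero (p ^ a) := ⟨pow_ne_zero a (Fact.out : p.Prime).ne_zero⟩
  haveI : NeZero (p ^ (a - 1)) := ⟨pow_ne_zero _ (Fact.out : p.Prime).ne_zero⟩
  obtain ⟨ζ, hζ⟩ := hroot
  set U : Finset (Fin d → ZMod (p ^ a)) :=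
    Finset.univ.filter (fun x => ∃ j, ¬ p ∣ (x j).val) with hU
  have hset : {ψ : AddChar (Fin d → ZMod (p ^ a)) R | ∃ g₀, IsPrimitiveRoot (ψ g₀) (p ^ a)}
      = ↑(U.image (Ave1.psi (R := R) hζ.pow_eq_one d)) := by
    ext ψ
    simp only [Set.mem_setOf_eq, Finset.coe_image, Set.mem_image, Finset.mem_coe,
      Finset.mem_filter, Finset.mem_univ, true_and, hU]
    constructor
    · rintro ⟨g₀, hg⟩
      obtain ⟨x, rfl⟩ := Ave1.psi_surjective hζ ψ
      exact ⟨x, (Ave1.psi_isPrimitiveRoot_iff hζ ha x).mp ⟨g₀, hg⟩, rfl⟩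
    · rintro ⟨x, hx, rfl⟩
      exact (Ave1.psi_isPrimitiveRoot_iff hζ ha x).mpr hx
  rw [hset, finsum_mem_coe_finset,
    Finset.sum_image (fun x _ y _ hxy => Ave1.psi_injective hζ hxy)]
  -- total sum over all x
  have htotal : ∑ x : Fin d → ZMod (p ^ a),
      ∑ w : Fin d → ZMod (p ^ a), Ave1.psi (R := R) hζ.pow_eq_one d x w * h (g + w)
      = ((p ^ (a * d) : ℕ) : R) * h g := by
    rw [Finset.sum_comm]
    have hstep : ∀ w : Fin d → ZMod (p ^ a),
        ∑ x : Fin d → ZMod (p ^ a), Ave1.psi (R := R) hζ.pow_eq_one d x w * h (g + w)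
        = if w = 0 then (((p ^ a) ^ d : ℕ) : R) * h (g + w) else 0 := by
      intro w
      rw [← Finset.sum_mul, Ave1.sum_psi hζ w, ite_mul, zero_mul]
    simp_rw [hstep]
    rw [Finset.sum_ite_eq' Finset.univ (0 : Fin d → ZMod (p ^ a))
      (fun w => (((p ^ a) ^ d : ℕ) : R) * h (g + w))]
    rw [if_pos (Finset.mem_univ _), add_zero, ← pow_mul]
  -- sum over non-exact x
  have hne : ∑ x ∈ Finset.univ.filter (fun x : Fin d → ZMod (p ^ a) => ¬ ∃ j, ¬ p ∣ (x j).val),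
      ∑ w : Fin d → ZMod (p ^ a), Ave1.psi (R := R) hζ.pow_eq_one d x w * h (g + w)
      = ((p ^ ((a - 1) * d) : ℕ) : R) *
          ∑ w ∈ Finset.univ.filter (fun w : Fin d → ZMod (p ^ a) => p • w = 0), h (g + w) := by
    have hJval : ∀ (y : Fin d → ZMod (p ^ (a - 1))) (i : Fin d),
        (((p : ZMod (p ^ a)) * (((y i).val : ℕ) : ZMod (p ^ a)))).val = p * (y i).val := by
      intro y i
      have hcast : (p : ZMod (p ^ a)) * (((y i).val : ℕ) : ZMod (p ^ a))
          = ((p * (y i).val : ℕ) : ZMod (p ^ a)) := by push_cast; ring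
      rw [hcast, ZMod.val_cast_of_lt]
      calc p * (y i).val < p * p ^ (a - 1) :=
            mul_lt_mul_of_pos_left (ZMod.val_lt _) (Fact.out : p.Prime).pos
        _ = p ^ a := by
            conv_rhs => rw [← Nat.sub_add_cancel ha]
            rw [pow_succ, mul_comm]
    have hbij : ∑ x ∈ Finset.univ.filter
          (fun x : Fin d → ZMod (p ^ a) => ¬ ∃ j, ¬ p ∣ (x j).val),
        ∑ w : Fin d → ZMod (p ^ a), Ave1.psi (R := R) hζ.pow_eq_one d x w * h (g + w)
        = ∑ y : Fin d → ZMod (p ^ (a - 1)),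
        ∑ w : Fin d → ZMod (p ^ a), Ave1.psi (R := R) hζ.pow_eq_one d
            (fun i => (p : ZMod (p ^ a)) * (((y i).val : ℕ) : ZMod (p ^ a))) w * h (g + w) := by
      have hJK : ∀ x ∈ Finset.univ.filter
          (fun x : Fin d → ZMod (p ^ a) => ¬ ∃ j, ¬ p ∣ (x j).val),
          (fun i => (p : ZMod (p ^ a)) *
            ((((((x i).val / p : ℕ) : ZMod (p ^ (a - 1)))).val : ℕ) : ZMod (p ^ a))) = x := by
        intro x hx
        rw [Finset.mem_filter] at hx
        have hdvd : ∀ j, p ∣ (x j).val := by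
          have := hx.2; push_neg at this; exact this
        funext i
        have hc := hdvd i
        have h1 : (p : ZMod (p ^ a)) *
            ((((((x i).val / p : ℕ) : ZMod (p ^ (a - 1)))).val : ℕ) : ZMod (p ^ a))
            = ((p * ((((x i).val / p : ℕ) : ZMod (p ^ (a - 1)))).val : ℕ) : ZMod (p ^ a)) := by
          push_cast; ring
        rw [h1, ZMod.val_natCast]
        have hmod : p * ((x i).val / p % p ^ (a - 1)) ≡ p * ((x i).val / p) [MOD p ^ a] := by
          have := (Nat.mod_modEq ((x i).val / p) (p ^ (a - 1))).mul_left' (c := p)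
          have hsp : p * p ^ (a - 1) = p ^ a := by
            conv_rhs => rw [← Nat.sub_add_cancel ha]
            rw [pow_succ, mul_comm]
          rwa [hsp] at this
        calc ((p * ((x i).val / p % p ^ (a - 1)) : ℕ) : ZMod (p ^ a))
            = ((p * ((x i).val / p) : ℕ) : ZMod (p ^ a)) :=
              (ZMod.natCast_eq_natCast_iff _ _ _).mpr hmod
          _ = (((x i).val : ℕ) : ZMod (p ^ a)) := by rw [Nat.mul_div_cancel' hc]
          _ = x i := ZMod.natCast_zmod_val _
      refine Finset.sum_nbij'
        (fun x => fun i => ((((x i).val / p : ℕ) : ZMod (p ^ (a - 1)))))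
        (fun y => fun i => (p : ZMod (p ^ a)) * (((y i).val : ℕ) : ZMod (p ^ a)))
        (fun x _ => Finset.mem_univ _) ?_ ?_ ?_ ?_
      · intro y _
        rw [Finset.mem_filter]
        refine ⟨Finset.mem_univ _, ?_⟩
        push_neg
        intro j
        rw [hJval y j]
        exact dvd_mul_right p _
      · intro x hx
        exact hJK x hx
      · intro y _
        funext i
        show ((((p : ZMod (p ^ a)) * (((y i).val : ℕ) : ZMod (p ^ a))).val / p : ℕ)
          : ZMod (p ^ (a - 1))) = y i
        rw [hJval y i, Nat.mul_div_cancel_left _ (Fact.out : p.Prime).pos,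
          ZMod.natCast_zmod_val]
      · intro x hx
        rw [hJK x hx]
    rw [hbij, Finset.sum_comm]
    have hstep : ∀ w : Fin d → ZMod (p ^ a),
        ∑ y : Fin d → ZMod (p ^ (a - 1)), Ave1.psi (R := R) hζ.pow_eq_one d
            (fun i => (p : ZMod (p ^ a)) * (((y i).val : ℕ) : ZMod (p ^ a))) w * h (g + w)
        = if p • w = 0 then ((p ^ ((a - 1) * d) : ℕ) : R) * h (g + w) else 0 := by
      intro w
      rw [← Finset.sum_mul, Ave1.sum_psi_mul hζ ha w, ite_mul, zero_mul]
      have hcond : (∀ i, (p : ZMod (p ^ a)) * w i = 0) ↔ p • w = 0 := by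
        simp only [funext_iff, Pi.smul_apply, Pi.zero_apply, nsmul_eq_mul, Pi.mul_apply,
          Pi.natCast_apply]
      exact if_congr hcond rfl rfl
    simp_rw [hstep]
    rw [← Finset.sum_filter, Finset.mul_sum]
  have hsplitsum := Finset.sum_filter_add_sum_filter_not Finset.univ
    (fun x : Fin d → ZMod (p ^ a) => ∃ j, ¬ p ∣ (x j).val)
    (fun x => ∑ w : Fin d → ZMod (p ^ a), Ave1.psi (R := R) hζ.pow_eq_one d x w * h (g + w))
  rw [htotal, hne] at hsplitsum
  rw [hU]
  linear_combination hsplitsum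
end

section
/- Let p be a prime and let k ⊆ E be an extension of finite fields whose characteristic is different from p. Assume k contains a primitive p-th root of unity, and if p = 2 assume moreover that k contains a primitive 4-th root of unity. Let ζ ∈ E satisfy ζ^(p^m) = 1 for some m ≥ 0. Then: if ζ does not lie in (the image of) k, the field trace Tr_{E/k}(ζ) equals 0; and if ζ lies in k, then Tr_{E/k}(ζ) = [E:k]·ζ. -/
lemma key_arith (p q t v s : ℕ) (hp : p.Prime) (hq2 : 2 ≤ q)
    (hqtv : q - 1 = p ^ t * v) (hv : ¬ p ∣ v)
    (ht1 : 1 ≤ t) (ht2 : p = 2 → 2 ≤ t) (hts : t < s) :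
    ∃ N : ℕ, (1 + p ^ (s - 1)) ≡ q ^ N [MOD p ^ s] := by
  have hs2 : 2 ≤ s := by omega
  have hq1 : (1:ℕ) ≤ q := by omega
  have htne : t ≠ 0 := by omega
  have hx1 : (q:ℤ) - 1 = (p:ℤ) ^ t * v := by
    have h := hqtv; zify [hq1] at h; exact_mod_cast h
  have hdq1 : p ∣ q - 1 := hqtv ▸ dvd_mul_of_dvd_left (dvd_pow_self p htne) v
  have hpq : ¬ p ∣ q := by
    intro h
    have h2 := Nat.dvd_sub h hdq1
    rw [Nat.sub_sub_self hq1] at h2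
    exact absurd (Nat.dvd_one.mp h2) hp.one_lt.ne'
  have hxz : ¬ (p:ℤ) ∣ (q:ℤ) := by exact_mod_cast hpq
  have hpz : (p:ℤ) ≠ 0 := by exact_mod_cast hp.pos.ne'
  set d := s - 1 - t with hd
  set D := p ^ d with hD
  have h1 : emultiplicity (p:ℤ) ((q:ℤ) - 1) = (t : ℕ∞) := by
    rw [emultiplicity_eq_coe]
    constructor
    · rw [hx1]; exact dvd_mul_right _ _
    · intro h
      rw [hx1, pow_succ] at h
      have := (mul_dvd_mul_iff_left (pow_ne_zero t hpz)).mp h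
      exact hv (by exact_mod_cast this)
  have h2 : emultiplicity p D = (d : ℕ∞) := by
    rw [emultiplicity_eq_coe]
    exact ⟨dvd_rfl, fun h => by
      have := (Nat.pow_dvd_pow_iff_le_right hp.one_lt).mp h; omega⟩
  have hmult : emultiplicity (p:ℤ) ((q:ℤ) ^ D - 1) = ((s - 1 : ℕ) : ℕ∞) := by
    rcases hp.eq_two_or_odd' with rfl | hodd
    · have hx1' : (q:ℤ) - 1 = (2:ℤ) ^ t * v := by exact_mod_cast hx1
      have h4 : (4:ℤ) ∣ (q:ℤ) - 1 := by
        rw [hx1']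
        refine dvd_mul_of_dvd_left ?_ (v:ℤ)
        have h22 : (4:ℤ) = 2 ^ 2 := by norm_num
        rw [h22]
        exact pow_dvd_pow 2 (ht2 rfl)
      have hth := Int.two_pow_sub_pow' D h4 (by exact_mod_cast hxz)
      rw [one_pow] at hth
      have hcast : emultiplicity ((2:ℕ):ℤ) ((q:ℤ) ^ D - 1)
          = emultiplicity (2:ℤ) ((q:ℤ) ^ D - 1) := by norm_num
      rw [hcast, hth]
      have h1' : emultiplicity (2:ℤ) ((q:ℤ) - 1) = (t : ℕ∞) := by
        rw [← h1]; norm_num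
      have hD2 : emultiplicity (2:ℤ) ((D:ℕ):ℤ) = emultiplicity (2:ℕ) D := by
        rw [← Int.natCast_emultiplicity]; norm_num
      rw [h1', hD2, h2]
      norm_cast
      omega
    · have hxy : (p:ℤ) ∣ (q:ℤ) - 1 := by
        rw [hx1]; exact dvd_mul_of_dvd_left (dvd_pow_self _ htne) (v:ℤ)
      have hth := Int.emultiplicity_pow_sub_pow hp hodd (y := 1) hxy hxz D
      rw [one_pow] at hth
      rw [hth, h1, h2]
      norm_cast
      omega
  have hdvd : (p:ℤ) ^ (s-1) ∣ (q:ℤ) ^ D - 1 :=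
    pow_dvd_of_le_emultiplicity (by rw [hmult])
  have hnd : ¬ (p:ℤ) ^ s ∣ (q:ℤ) ^ D - 1 := by
    intro h
    have h5 := le_emultiplicity_of_pow_dvd h
    rw [hmult] at h5
    have : s ≤ s - 1 := by exact_mod_cast h5
    omega
  obtain ⟨w, hw⟩ := hdvd
  have hpw : ¬ (p:ℤ) ∣ w := by
    intro h
    apply hnd
    rw [hw, show s = (s-1)+1 by omega, pow_succ]
    exact mul_dvd_mul_left _ h
  haveI : Fact p.Prime := ⟨hp⟩
  set W : ZMod p := ((w : ℤ) : ZMod p) with hWdef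
  have hW : W ≠ 0 := by rwa [hWdef, Ne, ZMod.intCast_zmod_eq_zero_iff_dvd]
  set j := (W⁻¹ : ZMod p).val with hjdef
  have hj : (p:ℤ) ∣ w * j - 1 := by
    rw [← ZMod.intCast_zmod_eq_zero_iff_dvd]
    push_cast
    rw [ZMod.natCast_val, ZMod.cast_id]
    rw [← hWdef, mul_inv_cancel₀ hW, sub_self]
  obtain ⟨r, hr⟩ := hj
  set c : ℤ := (p:ℤ) ^ (s-1) with hc
  have key : ∀ n : ℕ, ∃ e : ℤ, ((q:ℤ) ^ D) ^ n = 1 + c * (n * w) + c ^ 2 * e := by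
    intro n
    induction n with
    | zero => exact ⟨0, by simp⟩
    | succ n ih =>
      obtain ⟨e, he⟩ := ih
      refine ⟨e + n * w * w + c * e * w, ?_⟩
      have hx : (q:ℤ) ^ D = 1 + c * w := by linarith [hw]
      rw [pow_succ, he, hx]
      push_cast
      ring
  obtain ⟨e, he⟩ := key j
  refine ⟨D * j, ?_⟩
  rw [Nat.modEq_iff_dvd]
  push_cast
  have hcp : c * (p:ℤ) = (p:ℤ) ^ s := by
    rw [hc, ← pow_succ]; congr 1; omega
  have hc2 : c ^ 2 = (p:ℤ) ^ s * (p:ℤ) ^ (s-2) := by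
    rw [hc, ← pow_mul, ← pow_add]; congr 1; omega
  refine ⟨r + (p:ℤ) ^ (s-2) * e, ?_⟩
  rw [pow_mul, he]
  linear_combination c * hr + e * hc2 + r * hcp

/-- An element of a finite field extension fixed by `x ↦ x ^ |k|` lies in the base field. -/
lemma mem_range_of_pow_card (k E : Type*) [Field k] [Field E] [Fintype k] [Finite E]
    [Algebra k E] {x : E} (h : x ^ (Fintype.card k) = x) :
    x ∈ Set.range (algebraMap k E) := by
  classical
  haveI : Fintype E := Fintype.ofFinite E
  set q := Fintype.card k with hq
  have hq2 : 1 < q := Fintype.one_lt_card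
  set f : Polynomial E := Polynomial.X ^ q - Polynomial.X with hf
  have hfne : f ≠ 0 := FiniteField.X_pow_card_sub_X_ne_zero E hq2
  have hdeg : f.natDegree = q := FiniteField.X_pow_card_sub_X_natDegree_eq E hq2
  set S : Finset E := Finset.univ.image (algebraMap k E) with hS
  have hcardS : S.card = q := by
    rw [hS, Finset.card_image_of_injective _ (algebraMap k E).injective, Finset.card_univ]
  have hsub : S ⊆ f.roots.toFinset := by
    intro y hy
    rw [hS, Finset.mem_image] at hy
    obtain ⟨z, _, rfl⟩ := hy
    rw [Multiset.mem_toFinset, Polynomial.mem_roots hfne]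
    simp only [hf, Polynomial.IsRoot.def, Polynomial.eval_sub, Polynomial.eval_pow,
      Polynomial.eval_X]
    rw [← map_pow, FiniteField.pow_card, sub_self]
  have hcardT : f.roots.toFinset.card ≤ q := by
    calc f.roots.toFinset.card ≤ Multiset.card f.roots := f.roots.toFinset_card_le
      _ ≤ f.natDegree := f.card_roots'
      _ = q := hdeg
  have heq : S = f.roots.toFinset :=
    Finset.eq_of_subset_of_card_le hsub (by omega)
  have hx : x ∈ f.roots.toFinset := by
    rw [Multiset.mem_toFinset, Polynomial.mem_roots hfne]
    simp only [hf, Polynomial.IsRoot.def, Polynomial.eval_sub, Polynomial.eval_pow,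
      Polynomial.eval_X]
    rw [h, sub_self]
  rw [← heq, hS, Finset.mem_image] at hx
  obtain ⟨z, _, hz⟩ := hx
  exact ⟨z, hz⟩

/-- The trace is invariant under algebra automorphisms. -/
lemma trace_algEquiv_apply (k E : Type*) [Field k] [Field E] [Algebra k E]
    [FiniteDimensional k E] [IsGalois k E] (σ : E ≃ₐ[k] E) (x : E) :
    Algebra.trace k E (σ x) = Algebra.trace k E x := by
  apply (algebraMap k E).injective
  rw [trace_eq_sum_automorphisms, trace_eq_sum_automorphisms]
  exact Fintype.sum_equiv (Equiv.mulRight σ) _ _ (fun τ => rfl)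

set_option maxHeartbeats 1000000 in
/-- Trace evaluation (equation `eqt`) for `p`-power roots of unity, from the proof of
Theorem 4.11 (`T:b.W`): if `k ⊆ E` is an extension of finite fields of characteristic
`≠ p`, `k` contains a primitive `p`-th root of unity (and a primitive 4-th root of unity
when `p = 2`), and `ζ ∈ E` is a `p`-power root of unity, then `Tr_{E/k}(ζ) = 0` when
`ζ ∉ k`, while `Tr_{E/k}(ζ) = [E:k]·ζ` when `ζ ∈ k`. -/
theorem trace_pow_prime_root (p : ℕ) (hp : p.Prime)
    (k E : Type*) [Field k] [Field E] [Finite k] [Finite E] [Algebra k E]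
    (hchar : ringChar k ≠ p)
    (hroot : ∃ ω : k, IsPrimitiveRoot ω p)
    (hroot4 : p = 2 → ∃ ω : k, IsPrimitiveRoot ω 4)
    (ζ : E) (m : ℕ) (hζ : ζ ^ p ^ m = 1) :
    (ζ ∉ Set.range (algebraMap k E) → Algebra.trace k E ζ = 0) ∧
    (∀ x : k, algebraMap k E x = ζ →
      Algebra.trace k E ζ = Module.finrank k E • x) := by
  haveI : Fintype k := Fintype.ofFinite k
  haveI : Fintype E := Fintype.ofFinite E
  constructor
  · intro hnr
    have hinj := (algebraMap k E).injective
    set q := Fintype.card k with hqdef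
    have hq2 : 2 ≤ q := Fintype.one_lt_card
    obtain ⟨ω, hω⟩ := hroot
    -- order of ζ is p ^ s
    obtain ⟨s, hsm, hords⟩ := (Nat.dvd_prime_pow hp).mp (orderOf_dvd_of_pow_eq_one hζ)
    -- ζ is not fixed by the |k|-power Frobenius
    have hζq : ζ ^ q ≠ ζ := fun h => hnr (mem_range_of_pow_card k E h)
    have hq1 : ζ ^ (q - 1) ≠ 1 := by
      intro h
      apply hζq
      have h2 : ζ ^ (q - 1) * ζ = ζ := by rw [h, one_mul]
      rwa [← pow_succ, show q - 1 + 1 = q by omega] at h2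
    -- p ∣ q - 1 (and 4 ∣ q - 1 if p = 2)
    have hωne : ω ≠ 0 := hω.ne_zero hp.pos.ne'
    have hpq1 : p ∣ q - 1 :=
      hω.dvd_of_pow_eq_one _ (FiniteField.pow_card_sub_one_eq_one ω hωne)
    have h4q1 : p = 2 → 4 ∣ q - 1 := by
      intro h2
      obtain ⟨ω4, hω4⟩ := hroot4 h2
      have hω4ne : ω4 ≠ 0 := hω4.ne_zero (by norm_num)
      exact hω4.dvd_of_pow_eq_one _ (FiniteField.pow_card_sub_one_eq_one ω4 hω4ne)
    -- p-adic valuation of q - 1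
    haveI : Fact p.Prime := ⟨hp⟩
    set t := padicValNat p (q - 1) with htdef
    have hq1ne : q - 1 ≠ 0 := by omega
    have hptd : p ^ t ∣ q - 1 := pow_padicValNat_dvd
    have hnptd : ¬ p ^ (t + 1) ∣ q - 1 := pow_succ_padicValNat_not_dvd hq1ne
    have hle : ∀ a, p ^ a ∣ q - 1 → a ≤ t := by
      intro a ha
      by_contra hlt
      push_neg at hlt
      exact hnptd ((pow_dvd_pow p (by omega)).trans ha)
    have ht1 : 1 ≤ t := hle 1 (by simpa using hpq1)
    have ht2 : p = 2 → 2 ≤ t := by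
      intro h2
      refine hle 2 ?_
      rw [h2]
      simpa using h4q1 h2
    obtain ⟨v, hv⟩ := hptd
    have hvnd : ¬ p ∣ v := by
      rintro ⟨c, hc⟩
      exact hnptd ⟨c, by rw [hv, hc]; ring⟩
    -- t < s
    have hst : t < s := by
      by_contra hts
      push_neg at hts
      apply hq1
      have hdvd : orderOf ζ ∣ q - 1 := by
        rw [hords, hv]
        exact (pow_dvd_pow p hts).trans (dvd_mul_right _ _)
      exact orderOf_dvd_iff_pow_eq_one.mp hdvd
    -- the key arithmetic fact
    obtain ⟨N, hN⟩ := key_arith p q t v s hp hq2 hv hvnd ht1 ht2 hst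
    have hN' : (1 + p ^ (s - 1)) ≡ q ^ N [MOD orderOf ζ] := by
      rw [hords]; exact hN
    have hpow : ζ ^ (1 + p ^ (s - 1)) = ζ ^ (q ^ N) := by
      rw [← pow_mod_orderOf ζ (1 + p ^ (s - 1)), ← pow_mod_orderOf ζ (q ^ N), hN']
    -- u = ζ ^ (p ^ (s-1)) is a nontrivial p-th root of unity lying in k
    set u := ζ ^ (p ^ (s - 1)) with hu
    have hup : u ^ p = 1 := by
      rw [hu, ← pow_mul, ← pow_succ, show s - 1 + 1 = s by omega, ← hords,
        pow_orderOf_eq_one]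
    have hune : u ≠ 1 := by
      intro h
      have hd := orderOf_dvd_of_pow_eq_one h
      rw [hords] at hd
      have := (Nat.pow_dvd_pow_iff_le_right hp.one_lt).mp hd
      omega
    have hωE : IsPrimitiveRoot (algebraMap k E ω) p := hω.map_of_injective hinj
    haveI : NeZero p := ⟨hp.pos.ne'⟩
    obtain ⟨i, hip, hiu⟩ := hωE.eq_pow_of_pow_eq_one hup
    set x : k := ω ^ i with hxdef
    have hxu : algebraMap k E x = u := by rw [hxdef, map_pow, hiu]
    have hxne : x ≠ 1 := fun h => hune (by rw [← hxu, h, map_one])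
    -- the Frobenius x ↦ x ^ q ^ N as a k-algebra automorphism of E
    set c := ringChar k with hcdef
    haveI hckE : CharP E c := charP_of_injective_algebraMap hinj c
    have hcp : c.Prime := CharP.char_is_prime E c
    haveI : ExpChar E c := ExpChar.prime hcp
    obtain ⟨a, hcp', hqa⟩ := FiniteField.card k c
    have hqN : q ^ N = c ^ (a * N) := by rw [pow_mul, ← hqa]
    set φ : E →+* E := iterateFrobenius E c (a * N) with hφdef
    have hφ : ∀ y : E, φ y = y ^ q ^ N := by
      intro y
      rw [hφdef, iterateFrobenius_def, hqN]
    have hbij : Function.Bijective φ :=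
      ⟨φ.injective, Finite.surjective_of_injective φ.injective⟩
    set σ : E ≃ₐ[k] E := AlgEquiv.ofRingEquiv (f := RingEquiv.ofBijective φ hbij)
      (fun z => by
        show φ (algebraMap k E z) = algebraMap k E z
        rw [hφ, ← map_pow, FiniteField.pow_card_pow]) with hσdef
    have hσζ : σ ζ = ζ ^ q ^ N := hφ ζ
    -- conclude
    have htr : Algebra.trace k E (ζ ^ q ^ N) = Algebra.trace k E ζ := by
      rw [← hσζ]
      exact trace_algEquiv_apply k E σ ζ
    have hsmul : Algebra.trace k E (x • ζ) = Algebra.trace k E ζ := by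
      rw [Algebra.smul_def, hxu]
      have huz : u * ζ = ζ ^ (1 + p ^ (s - 1)) := by
        rw [pow_add, pow_one, hu, mul_comm]
      rw [huz, hpow, htr]
    rw [map_smul, smul_eq_mul] at hsmul
    have hfac : (x - 1) * Algebra.trace k E ζ = 0 := by
      rw [sub_mul, one_mul, hsmul, sub_self]
    rcases mul_eq_zero.mp hfac with h | h
    · exact absurd (sub_eq_zero.mp h) hxne
    · exact h
  · intro x hx
    rw [← hx, Algebra.trace_algebraMap]
end
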